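/- arXiv:1006.1959 — 2 statements merged into one kernel-verified Lean document; each statement's English description precedes it below -/
import Mathlib

section
/- For all integers n ≥ 1 and j with 0 ≤ j ≤ n, the binomial identity Σ_{k ≥ 0} N(n,k)·C(k+1,j) = (1/(n−j+1))·C(n,j)·C(2n−j, n) holds, where N(n,k) = (1/n)·C(n,k)·C(n,k+1) is the Narayana number and C denotes the binomial coefficient. -/
lemma narayana_key (n j : ℕ) (hn : 1 ≤ n) (hj : j ≤ n) :
    ∑ k ∈ Finset.range n, n.choose k * n.choose (k+1) * (k+1).choose j
      = n.choose j * (2*n - j).choose (n-1) := by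
  have h1 : ∀ k ∈ Finset.range n,
      n.choose k * n.choose (k+1) * (k+1).choose j
        = n.choose j * (n.choose k * (n-j).choose (n-1-k)) := by
    intro k hk
    rw [Finset.mem_range] at hk
    rcases le_or_gt j (k+1) with h | h
    · rw [mul_assoc, Nat.choose_mul h]
      have hsym : (n-j).choose (n-1-k) = (n-j).choose (k+1-j) := by
        have : (n-j) - (k+1-j) = n-1-k := by omega
        rw [← this]
        exact Nat.choose_symm (by omega)
      rw [hsym]; ring
    · rw [Nat.choose_eq_zero_of_lt h, Nat.choose_eq_zero_of_lt (by omega : n-j < n-1-k)]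
      ring
  rw [Finset.sum_congr rfl h1, ← Finset.mul_sum]
  congr 1
  have h2 : 2*n - j = n + (n-j) := by omega
  rw [h2, Nat.add_choose_eq, Finset.Nat.sum_antidiagonal_eq_sum_range_succ_mk]
  have h3 : n - 1 + 1 = n := by omega
  rw [Nat.succ_eq_add_one, h3]

/-- The binomial identity `∑_{k ≥ 0} N(n,k) C(k+1,j) = (1/(n-j+1)) C(n,j) C(2n-j, n)`,
where `N(n,k) = (1/n) C(n,k) C(n,k+1)` is the Narayana number. -/
theorem narayana_sum_choose_succ (n j : ℕ) (hn : 1 ≤ n) (hj : j ≤ n) :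
    (∑ᶠ k : ℕ,
        (1 / (n : ℚ)) * (n.choose k) * (n.choose (k + 1)) * ((k + 1).choose j)) =
      (1 / ((n : ℚ) - j + 1)) * (n.choose j) * ((2 * n - j).choose n) := by
  have hsupp : (Function.support fun k : ℕ =>
      (1 / (n : ℚ)) * (n.choose k) * (n.choose (k + 1)) * ((k + 1).choose j))
      ⊆ (Finset.range n : Finset ℕ) := by
    intro k hk
    simp only [Function.mem_support, ne_eq] at hk
    simp only [Finset.coe_range, Set.mem_Iio]
    by_contra h
    push_neg at h
    have : n.choose (k+1) = 0 := Nat.choose_eq_zero_of_lt (by omega)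
    rw [this] at hk
    simp at hk
  rw [finsum_eq_finset_sum_of_support_subset _ hsupp]
  have hsum : ∑ k ∈ Finset.range n,
      (1 / (n : ℚ)) * (n.choose k) * (n.choose (k + 1)) * ((k + 1).choose j)
      = (1 / (n : ℚ)) * (n.choose j * (2*n - j).choose (n-1) : ℕ) := by
    rw [← narayana_key n j hn hj]
    push_cast
    rw [Finset.mul_sum]
    exact Finset.sum_congr rfl fun k _ => by ring
  rw [hsum]
  -- ratio identity: C(2n-j, n) * n = C(2n-j, n-1) * (n-j+1)
  have hr : (2*n - j).choose n * n = (2*n - j).choose (n-1) * (n - j + 1) := by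
    have := Nat.choose_succ_right_eq (2*n-j) (n-1)
    have h3 : n - 1 + 1 = n := by omega
    rw [h3] at this
    have h4 : 2*n - j - (n-1) = n - j + 1 := by omega
    rw [h4] at this
    exact this
  have hn0 : (n : ℚ) ≠ 0 := by positivity
  have hd : ((n : ℚ) - j + 1) ≠ 0 := by
    have : (j : ℚ) ≤ n := by exact_mod_cast hj
    linarith
  have hrQ : ((2*n - j).choose n : ℚ) * n = ((2*n - j).choose (n-1) : ℚ) * ((n:ℚ) - j + 1) := by
    have := congrArg (fun x : ℕ => (x : ℚ)) hr
    push_cast at this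
    rw [Nat.cast_sub hj] at this
    convert this using 2
  push_cast
  field_simp
  nlinarith [hrQ, sq_nonneg ((n:ℚ))]
end

section
/- For every real number x with 0 < x < 3 − 2√2, set R = √(x² − 6x + 1), s = (1 + x − R)/(4x), S = 2s − 1, L = (1 − 5x + R) / (((x−1)² + (x+1)·R)·R), and B = (7x − 2x² − 1 + R)/(2x·R) − 1. Then the pair (L, B) satisfies the system of equations L = (1 + x·(B − S)·s)/(1 − x·S) and B = (1 + x·L·S + x·(L − s)·S)/(1 − x − x·S). -/
set_option maxHeartbeats 1000000 in
/-- For `0 < x < 3 - 2√2`, the closed-form expressions for the generating functions of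
little hybrid paths `L` and big hybrid paths `B` satisfy the defining system of
equations. -/
theorem hybrid_gf_system (x : ℝ) (hx0 : 0 < x) (hx1 : x < 3 - 2 * Real.sqrt 2) :
    let R : ℝ := Real.sqrt (x ^ 2 - 6 * x + 1)
    let s : ℝ := (1 + x - R) / (4 * x)
    let S : ℝ := 2 * s - 1
    let L : ℝ := (1 - 5 * x + R) / (((x - 1) ^ 2 + (x + 1) * R) * R)
    let B : ℝ := (7 * x - 2 * x ^ 2 - 1 + R) / (2 * x * R) - 1
    L = (1 + x * (B - S) * s) / (1 - x * S) ∧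
      B = (1 + x * L * S + x * (L - s) * S) / (1 - x - x * S) := by
  intro R s S L B
  have h2 : Real.sqrt 2 ^ 2 = 2 := Real.sq_sqrt (by norm_num)
  have h2pos : (0:ℝ) < Real.sqrt 2 := Real.sqrt_pos.mpr (by norm_num)
  have hq : 0 < x ^ 2 - 6 * x + 1 := by nlinarith [sq_nonneg (3 - 2*Real.sqrt 2 - x)]
  have hRpos : 0 < R := Real.sqrt_pos.mpr hq
  have hR2 : R ^ 2 = x ^ 2 - 6 * x + 1 := Real.sq_sqrt hq.le
  have hx1' : x < 1 := by nlinarith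
  have hd1 : (x - 1) ^ 2 + (x + 1) * R ≠ 0 := by positivity
  have hxne : x ≠ 0 := hx0.ne'
  have hRne : R ≠ 0 := hRpos.ne'
  have hs : s = (1 + x - R) / (4 * x) := rfl
  have hS : S = (1 - x - R) / (2 * x) := by
    show 2 * ((1 + x - R) / (4 * x)) - 1 = _
    field_simp; ring
  have hL : L = (1 - 5 * x + R) / (((x - 1) ^ 2 + (x + 1) * R) * R) := rfl
  have hB : B = (7 * x - 2 * x ^ 2 - 1 + R) / (2 * x * R) - 1 := rfl
  have hd2 : 1 - x * ((1 - x - R) / (2 * x)) ≠ 0 := by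
    field_simp; intro h; nlinarith
  have hd3 : 1 - x - x * ((1 - x - R) / (2 * x)) ≠ 0 := by
    field_simp; intro h; nlinarith
  constructor
  · rw [hL, hB, hS, hs, div_eq_div_iff (by positivity) hd2]
    field_simp
    linear_combination (-1 * x ^ 0 * R ^ 0 + 1 * x ^ 0 * R ^ 2 + -2 * x ^ 1 * R ^ 0 + -5 * x ^ 1 * R ^ 1 + 1 * x ^ 1 * R ^ 2 + -3 * x ^ 2 * R ^ 0 + -1 * x ^ 2 * R ^ 1 + -2 * x ^ 3 * R ^ 0) * hR2
  · rw [hB, hL, hS, hs, eq_div_iff hd3]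
    field_simp
    linear_combination (4 * x ^ 0 * R ^ 0 + 2 * x ^ 0 * R ^ 1 + 2 * x ^ 0 * R ^ 2 + -12 * x ^ 1 * R ^ 1 + 2 * x ^ 1 * R ^ 2 + 4 * x ^ 2 * R ^ 0 + -6 * x ^ 2 * R ^ 1 + -8 * x ^ 3 * R ^ 0) * hR2
end
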